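/- The image F of the homomorphism B_4 → GL(3, Z/4) sending σ1, σ2, σ3 to the matrices M1 = [[1,0,0],[1,1,0],[1,0,1]], M2 = [[2,3,0],[1,0,0],[0,0,1]], M3 = [[1,0,0],[0,2,3],[0,1,0]] is a finite group of order 768. -/

import Mathlib

set_option maxRecDepth 100000
set_option maxHeartbeats 4000000


/-- The braid relations on `n` Artin generators. -/
def braidRels (n : ℕ) : Set (FreeGroup (Fin n)) :=
  { r | (∃ i j : Fin n, (i : ℕ) + 1 = j ∧
          r = FreeGroup.of i * FreeGroup.of j * FreeGroup.of i *
              (FreeGroup.of j * FreeGroup.of i * FreeGroup.of j)⁻¹) ∨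
        (∃ i j : Fin n, (i : ℕ) + 2 ≤ j ∧
          r = FreeGroup.of i * FreeGroup.of j * (FreeGroup.of j * FreeGroup.of i)⁻¹) }

/-- The Artin braid group `B₄` on four strands. -/
def BraidGroup4 : Type := PresentedGroup (braidRels 3)

instance : Group BraidGroup4 := by unfold BraidGroup4; infer_instance

def σ₁ : BraidGroup4 := PresentedGroup.of 0
def σ₂ : BraidGroup4 := PresentedGroup.of 1
def σ₃ : BraidGroup4 := PresentedGroup.of 2

/-- The reduced Burau matrices at `t = -1` over `ℤ/4`. -/
def M1 : Matrix (Fin 3) (Fin 3) (ZMod 4) := !![1,0,0; 1,1,0; 1,0,1]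
def M2 : Matrix (Fin 3) (Fin 3) (ZMod 4) := !![2,3,0; 1,0,0; 0,0,1]
def M3 : Matrix (Fin 3) (Fin 3) (ZMod 4) := !![1,0,0; 0,2,3; 0,1,0]

namespace BurauAux

abbrev Mat := Matrix (Fin 3) (Fin 3) (ZMod 4)
abbrev GLt := GL (Fin 3) (ZMod 4)

def M1i : Mat := !![1,0,0; 3,1,0; 3,0,1]
def M2i : Mat := !![0,1,0; 3,2,0; 0,0,1]
def M3i : Mat := !![1,0,0; 0,0,1; 0,3,2]

def er (v : Fin 3 → ZMod 4) : ℕ := (v 0).val + 4 * (v 1).val + 16 * (v 2).val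
def cM (m : Mat) : ℕ := er (m 0) + 64 * (er (m 1) + 64 * er (m 2))

lemma er_lt : ∀ v : Fin 3 → ZMod 4, er v < 64 := by decide
lemma er_inj : ∀ v w : Fin 3 → ZMod 4, er v = er w → v = w := by decide

lemma cM_inj : Function.Injective cM := by
  intro m m' h
  unfold cM at h
  have b0 := er_lt (m 0); have b1 := er_lt (m 1); have b2 := er_lt (m 2)
  have b0' := er_lt (m' 0); have b1' := er_lt (m' 1); have b2' := er_lt (m' 2)
  have e0 : er (m 0) = er (m' 0) := by omega
  have e1 : er (m 1) = er (m' 1) := by omega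
  have e2 : er (m 2) = er (m' 2) := by omega
  have r0 := er_inj _ _ e0
  have r1 := er_inj _ _ e1
  have r2 := er_inj _ _ e2
  funext i
  fin_cases i <;> assumption

def f1 (n : ℕ) : ℕ :=
  ((n % 4) + (n / 4 % 4) + (n / 16 % 4)) % 4 + 4 * ((((n / 4 % 4)) % 4)) + 16 * ((((n / 16 % 4)) % 4))

def f2 (n : ℕ) : ℕ :=
  (2 * (n % 4) + (n / 4 % 4)) % 4 + 4 * (((3 * (n % 4)) % 4)) + 16 * ((((n / 16 % 4)) % 4))

def f3 (n : ℕ) : ℕ :=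
  ((n % 4)) % 4 + 4 * (((2 * (n / 4 % 4) + (n / 16 % 4)) % 4)) + 16 * (((3 * (n / 4 % 4)) % 4))

def f4 (n : ℕ) : ℕ :=
  ((n % 4) + 3 * (n / 4 % 4) + 3 * (n / 16 % 4)) % 4 + 4 * ((((n / 4 % 4)) % 4)) + 16 * ((((n / 16 % 4)) % 4))

def f5 (n : ℕ) : ℕ :=
  (3 * (n / 4 % 4)) % 4 + 4 * ((((n % 4) + 2 * (n / 4 % 4)) % 4)) + 16 * ((((n / 16 % 4)) % 4))

def f6 (n : ℕ) : ℕ :=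
  ((n % 4)) % 4 + 4 * (((3 * (n / 16 % 4)) % 4)) + 16 * ((((n / 4 % 4) + 2 * (n / 16 % 4)) % 4))

def FF (f : ℕ → ℕ) (n : ℕ) : ℕ := f (n % 64) + 64 * (f (n / 64 % 64) + 64 * f (n / 64 / 64))

lemma f1_spec : ∀ v : Fin 3 → ZMod 4, f1 (er v) = er (Matrix.vecMul v M1) := by decide
lemma f2_spec : ∀ v : Fin 3 → ZMod 4, f2 (er v) = er (Matrix.vecMul v M2) := by decide
lemma f3_spec : ∀ v : Fin 3 → ZMod 4, f3 (er v) = er (Matrix.vecMul v M3) := by decide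
lemma f4_spec : ∀ v : Fin 3 → ZMod 4, f4 (er v) = er (Matrix.vecMul v M1i) := by decide
lemma f5_spec : ∀ v : Fin 3 → ZMod 4, f5 (er v) = er (Matrix.vecMul v M2i) := by decide
lemma f6_spec : ∀ v : Fin 3 → ZMod 4, f6 (er v) = er (Matrix.vecMul v M3i) := by decide

lemma row_mul (m g : Mat) (i : Fin 3) : (m * g) i = Matrix.vecMul (m i) g := rfl

lemma FF_spec {f : ℕ → ℕ} {g : Mat} (hf : ∀ v, f (er v) = er (Matrix.vecMul v g))
    (m : Mat) : FF f (cM m) = cM (m * g) := by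
  have h0 := er_lt (m 0); have h1 := er_lt (m 1); have h2 := er_lt (m 2)
  have d0 : cM m % 64 = er (m 0) := by unfold cM; omega
  have d1 : cM m / 64 % 64 = er (m 1) := by unfold cM; omega
  have d2 : cM m / 64 / 64 = er (m 2) := by unfold cM; omega
  unfold FF
  rw [d0, d1, d2, hf, hf, hf]
  unfold cM
  rw [row_mul, row_mul, row_mul]

def C1 : List ℕ := [4888, 4953, 5018, 5083, 5668, 5733, 5798, 5863, 6448, 6513, 6578, 6643, 7180, 7245, 7310, 7375, 12562, 12627, 12688, 12753, 13358, 13423, 13484, 13549, 15162, 15227, 15288, 15353, 15878, 15943, 16004, 16069, 16474, 16734, 16978, 17238, 17579, 17839, 18083, 18343, 18680, 18940, 19184, 19444, 19465, 19725, 19969, 20229, 20569, 20894, 21203, 21268, 21739, 21804, 22113, 22438, 22649, 22974, 23283, 23348, 23755, 23820, 24129, 24454]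
def C2 : List ℕ := [24664, 25054, 25168, 25558, 25643, 26029, 26147, 26533, 26874, 27004, 27378, 27508, 27785, 27919, 28289, 28423, 28763, 28958, 29393, 29588, 29803, 29998, 30433, 30628, 30843, 31038, 31473, 31668, 31819, 32014, 32449, 32644, 37209, 37339, 37648, 37778, 37924, 38054, 38509, 38639, 39224, 39354, 39793, 39923, 40005, 40135, 40460, 40590, 45338, 45464, 45907, 46033, 46183, 46309, 46638, 46764, 47483, 47609, 47922, 48048, 48134, 48260, 48719, 48845]
def C3 : List ℕ := [49360, 49620, 49880, 50140, 50209, 50469, 50729, 50989, 51314, 51574, 51834, 52094, 52355, 52615, 52875, 53135, 53459, 53654, 53849, 54044, 54499, 54694, 54889, 55084, 55539, 55734, 55929, 56124, 56515, 56710, 56905, 57100, 57554, 57684, 58074, 58204, 58529, 58663, 59049, 59183, 59504, 59894, 60024, 60414, 60419, 60805, 60939, 61325, 61649, 61718, 62043, 62364, 62563, 62884, 63209, 63278, 63729, 63798, 64123, 64444, 64579, 64900, 65225, 65294]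
def C4 : List ℕ := [65614, 65793, 66244, 66443, 66654, 66833, 67284, 67483, 67694, 67873, 68324, 68523, 68734, 68913, 69364, 69563, 69709, 69953, 70213, 70473, 70814, 71058, 71318, 71578, 71919, 72163, 72423, 72683, 72764, 73008, 73268, 73528, 73804, 74113, 74438, 74507, 74974, 75027, 75348, 75673, 75884, 76193, 76518, 76587, 77054, 77107, 77428, 77753, 77903, 78273, 78407, 78793, 78878, 79248, 79382, 79768, 80109, 80227, 80613, 80747, 81084, 81202, 81588, 81722]
def C5 : List ℕ := [82189, 82319, 82758, 82884, 83034, 83160, 83473, 83603, 84334, 84460, 84773, 84903, 85049, 85179, 85618, 85744, 90444, 90574, 90887, 91013, 91163, 91289, 91728, 91858, 92463, 92589, 93028, 93158, 93304, 93434, 93747, 93873, 98500, 98569, 98894, 99203, 99414, 99739, 100060, 100113, 100580, 100649, 100974, 101283, 101494, 101819, 102140, 102193, 102599, 102859, 103119, 103363, 103444, 103704, 103964, 104208, 104549, 104809, 105069, 105313, 105654, 105914, 106174, 106418]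
def C6 : List ℕ := [106694, 106889, 107084, 107267, 107734, 107929, 108124, 108307, 108774, 108969, 109164, 109347, 109814, 110009, 110204, 110387, 110789, 110923, 111309, 111427, 111764, 111898, 112284, 112402, 112743, 113129, 113263, 113633, 113718, 114104, 114238, 114608, 114949, 115014, 115079, 115140, 115729, 115794, 115859, 115920, 117549, 117614, 117679, 117740, 118329, 118394, 118459, 118520, 123663, 123724, 123789, 123854, 124443, 124504, 124569, 124634, 125223, 125284, 125349, 125414, 126003, 126064, 126129, 126194]
def C7 : List ℕ := [135472, 135602, 136057, 136187, 136269, 136399, 136708, 136838, 137553, 137683, 138008, 138138, 138284, 138414, 138853, 138983, 143731, 143857, 144186, 144312, 144398, 144524, 144967, 145093, 145682, 145808, 146267, 146393, 146543, 146669, 146982, 147108, 147704, 147838, 148208, 148342, 148619, 148749, 149123, 149253, 149594, 149980, 150098, 150484, 150569, 150959, 151073, 151463, 151803, 151868, 152177, 152502, 152649, 152974, 153283, 153348, 153819, 153884, 154193, 154518, 154729, 155054, 155363, 155428]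
def C8 : List ℕ := [155898, 156158, 156402, 156662, 156683, 156943, 157187, 157447, 157784, 158044, 158288, 158548, 158889, 159149, 159393, 159653, 159993, 160188, 160371, 160566, 160969, 161164, 161347, 161542, 162009, 162204, 162387, 162582, 163049, 163244, 163427, 163622, 168248, 168313, 168378, 168443, 168964, 169029, 169094, 169159, 170768, 170833, 170898, 170963, 171564, 171629, 171694, 171759, 176946, 177011, 177072, 177137, 177678, 177743, 177804, 177869, 178458, 178523, 178584, 178649, 179238, 179303, 179364, 179429]
def C9 : List ℕ := [180338, 180724, 180858, 181244, 181249, 181639, 181769, 182159, 182480, 182614, 183000, 183134, 183459, 183589, 183979, 184109, 184433, 184628, 185083, 185278, 185409, 185604, 186059, 186254, 186449, 186644, 187099, 187294, 187489, 187684, 188139, 188334, 188528, 188788, 189048, 189308, 189569, 189829, 190089, 190349, 190674, 190934, 191194, 191454, 191523, 191783, 192043, 192303, 192627, 192948, 193273, 193342, 193729, 193798, 194123, 194444, 194643, 194964, 195289, 195358, 195809, 195878, 196203, 196524]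
def C10 : List ℕ := [196844, 197027, 197222, 197417, 197884, 198067, 198262, 198457, 198860, 199043, 199238, 199433, 199900, 200083, 200278, 200473, 200943, 201057, 201447, 201577, 201918, 202032, 202422, 202552, 202829, 203203, 203333, 203723, 203804, 204178, 204308, 204698, 205038, 205091, 205412, 205737, 205948, 206257, 206582, 206651, 207054, 207107, 207428, 207753, 207964, 208273, 208598, 208667, 209133, 209377, 209637, 209897, 209982, 210226, 210486, 210746, 211023, 211267, 211527, 211787, 212124, 212368, 212628, 212888]
def C11 : List ℕ := [213797, 213862, 213927, 213988, 214577, 214642, 214707, 214768, 215309, 215374, 215439, 215500, 216089, 216154, 216219, 216280, 221487, 221548, 221613, 221678, 222267, 222328, 222393, 222458, 224007, 224068, 224133, 224198, 224787, 224848, 224913, 224978, 229478, 229803, 230124, 230177, 230644, 230713, 231038, 231347, 231494, 231819, 232140, 232193, 232660, 232729, 233054, 233363, 233573, 233963, 234093, 234467, 234548, 234938, 235068, 235442, 235719, 235849, 236239, 236353, 236694, 236824, 237214, 237328]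
def C12 : List ℕ := [237668, 237867, 238318, 238497, 238708, 238907, 239358, 239537, 239684, 239883, 240334, 240513, 240724, 240923, 241374, 241553, 241767, 242027, 242287, 242531, 242868, 243128, 243388, 243632, 243909, 244169, 244429, 244673, 244758, 245018, 245278, 245522, 246118, 246244, 246573, 246703, 246833, 246963, 247418, 247544, 248069, 248199, 248654, 248780, 248914, 249040, 249369, 249499, 254247, 254373, 254828, 254958, 255088, 255218, 255547, 255673, 256324, 256454, 256783, 256909, 257043, 257169, 257624, 257754]
def L : List ℕ := C1 ++ C2 ++ C3 ++ C4 ++ C5 ++ C6 ++ C7 ++ C8 ++ C9 ++ C10 ++ C11 ++ C12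
def memb (n : ℕ) : Bool :=
  if n < 24664 then C1.elem n else
  if n < 49360 then C2.elem n else
  if n < 65614 then C3.elem n else
  if n < 82189 then C4.elem n else
  if n < 106694 then C5.elem n else
  if n < 135472 then C6.elem n else
  if n < 155898 then C7.elem n else
  if n < 180338 then C8.elem n else
  if n < 196844 then C9.elem n else
  if n < 213797 then C10.elem n else
  if n < 237668 then C11.elem n else
  C12.elem n

lemma mem_of_memb {n : ℕ} (h : memb n = true) : n ∈ L := by
  unfold memb at h
  unfold L
  simp only [List.mem_append]
  repeat' split at h
  all_goals have hm := List.mem_of_elem_eq_true h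
  all_goals tauto

def chk : List ℕ → Bool
  | [] => true
  | [_] => true
  | a :: b :: t => (decide (a < b) && chk (b :: t) : Bool)

lemma chk_sorted : ∀ l : List ℕ, chk l = true → l.Chain' (· < ·)
  | [], _ => List.isChain_nil
  | [a], _ => List.isChain_singleton a
  | a :: b :: t, h => by
      have h' : decide (a < b) = true ∧ chk (b :: t) = true := by
        simpa [chk, Bool.and_eq_true] using h
      exact List.isChain_cons_cons.2 ⟨of_decide_eq_true h'.1, chk_sorted (b :: t) h'.2⟩

lemma L_chk : chk L = true := by decide
lemma L_nodup : L.Nodup :=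
  (List.isChain_iff_pairwise.mp (chk_sorted L L_chk)).imp Nat.ne_of_lt
lemma L_len : L.length = 768 := by decide
lemma one_mem_L : cM (1 : Mat) ∈ L := by decide

lemma Lc1 : ∀ n ∈ C1, memb (FF f1 n) = true ∧ memb (FF f2 n) = true ∧ memb (FF f3 n) = true ∧ memb (FF f4 n) = true ∧ memb (FF f5 n) = true ∧ memb (FF f6 n) = true := by decide
lemma Lc2 : ∀ n ∈ C2, memb (FF f1 n) = true ∧ memb (FF f2 n) = true ∧ memb (FF f3 n) = true ∧ memb (FF f4 n) = true ∧ memb (FF f5 n) = true ∧ memb (FF f6 n) = true := by decide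
lemma Lc3 : ∀ n ∈ C3, memb (FF f1 n) = true ∧ memb (FF f2 n) = true ∧ memb (FF f3 n) = true ∧ memb (FF f4 n) = true ∧ memb (FF f5 n) = true ∧ memb (FF f6 n) = true := by decide
lemma Lc4 : ∀ n ∈ C4, memb (FF f1 n) = true ∧ memb (FF f2 n) = true ∧ memb (FF f3 n) = true ∧ memb (FF f4 n) = true ∧ memb (FF f5 n) = true ∧ memb (FF f6 n) = true := by decide
lemma Lc5 : ∀ n ∈ C5, memb (FF f1 n) = true ∧ memb (FF f2 n) = true ∧ memb (FF f3 n) = true ∧ memb (FF f4 n) = true ∧ memb (FF f5 n) = true ∧ memb (FF f6 n) = true := by decide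
lemma Lc6 : ∀ n ∈ C6, memb (FF f1 n) = true ∧ memb (FF f2 n) = true ∧ memb (FF f3 n) = true ∧ memb (FF f4 n) = true ∧ memb (FF f5 n) = true ∧ memb (FF f6 n) = true := by decide
lemma Lc7 : ∀ n ∈ C7, memb (FF f1 n) = true ∧ memb (FF f2 n) = true ∧ memb (FF f3 n) = true ∧ memb (FF f4 n) = true ∧ memb (FF f5 n) = true ∧ memb (FF f6 n) = true := by decide
lemma Lc8 : ∀ n ∈ C8, memb (FF f1 n) = true ∧ memb (FF f2 n) = true ∧ memb (FF f3 n) = true ∧ memb (FF f4 n) = true ∧ memb (FF f5 n) = true ∧ memb (FF f6 n) = true := by decide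
lemma Lc9 : ∀ n ∈ C9, memb (FF f1 n) = true ∧ memb (FF f2 n) = true ∧ memb (FF f3 n) = true ∧ memb (FF f4 n) = true ∧ memb (FF f5 n) = true ∧ memb (FF f6 n) = true := by decide
lemma Lc10 : ∀ n ∈ C10, memb (FF f1 n) = true ∧ memb (FF f2 n) = true ∧ memb (FF f3 n) = true ∧ memb (FF f4 n) = true ∧ memb (FF f5 n) = true ∧ memb (FF f6 n) = true := by decide
lemma Lc11 : ∀ n ∈ C11, memb (FF f1 n) = true ∧ memb (FF f2 n) = true ∧ memb (FF f3 n) = true ∧ memb (FF f4 n) = true ∧ memb (FF f5 n) = true ∧ memb (FF f6 n) = true := by decide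
lemma Lc12 : ∀ n ∈ C12, memb (FF f1 n) = true ∧ memb (FF f2 n) = true ∧ memb (FF f3 n) = true ∧ memb (FF f4 n) = true ∧ memb (FF f5 n) = true ∧ memb (FF f6 n) = true := by decide

lemma L_closed : ∀ n ∈ L, FF f1 n ∈ L ∧ FF f2 n ∈ L ∧ FF f3 n ∈ L ∧
    FF f4 n ∈ L ∧ FF f5 n ∈ L ∧ FF f6 n ∈ L := by
  intro n hn
  have h : n ∈ C1 ∨ n ∈ C2 ∨ n ∈ C3 ∨ n ∈ C4 ∨ n ∈ C5 ∨ n ∈ C6 ∨ n ∈ C7 ∨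
      n ∈ C8 ∨ n ∈ C9 ∨ n ∈ C10 ∨ n ∈ C11 ∨ n ∈ C12 := by
    simpa only [L, List.mem_append, or_assoc] using hn
  have key : memb (FF f1 n) = true ∧ memb (FF f2 n) = true ∧ memb (FF f3 n) = true ∧
      memb (FF f4 n) = true ∧ memb (FF f5 n) = true ∧ memb (FF f6 n) = true := by
    rcases h with h|h|h|h|h|h|h|h|h|h|h|h
    · exact Lc1 n h
    · exact Lc2 n h
    · exact Lc3 n h
    · exact Lc4 n h
    · exact Lc5 n h
    · exact Lc6 n h
    · exact Lc7 n h
    · exact Lc8 n h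
    · exact Lc9 n h
    · exact Lc10 n h
    · exact Lc11 n h
    · exact Lc12 n h
  exact ⟨mem_of_memb key.1, mem_of_memb key.2.1, mem_of_memb key.2.2.1,
    mem_of_memb key.2.2.2.1, mem_of_memb key.2.2.2.2.1, mem_of_memb key.2.2.2.2.2⟩

def P1 : List (ℕ × List (Fin 6)) := [
  (4888, [1,2,1,0,0]),
  (4953, [1,2,1,0]),
  (5018, [1,2,1]),
  (5083, [1,2,1,3]),
  (5668, [0,1,1,0,5,4]),
  (5733, [1,1,2,1,0]),
  (5798, [1,1,2,1]),
  (5863, [1,1,2,1,3]),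
  (6448, [2,1,0,0,5]),
  (6513, [2,1,0,5]),
  (6578, [2,1,5]),
  (6643, [2,1,3,5]),
  (7180, [2,1,0,0]),
  (7245, [2,1,0]),
  (7310, [2,1]),
  (7375, [2,1,3]),
  (12562, [1,0,0,2,4]),
  (12627, [0,0,2,4,3,5]),
  (12688, [0,0,2,4,5]),
  (12753, [0,0,2,4,0,5]),
  (13358, [0,1,1,3,5,1]),
  (13423, [0,0,1,1,2,4,3]),
  (13484, [0,0,1,1,2,4]),
  (13549, [0,0,1,1,2,4,0]),
  (15162, [4,0,0,2,4]),
  (15227, [0,0,1,5,1,3]),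
  (15288, [0,0,1,5,1]),
  (15353, [0,0,1,5,1,0]),
  (15878, [0,0,2,4,0,0]),
  (15943, [0,0,2,4,3]),
  (16004, [0,0,2,4]),
  (16069, [0,0,2,4,0]),
  (16474, [1,2]),
  (16734, [1,2,1,3,4]),
  (16978, [1,0,2,1,1,3]),
  (17238, [1,2,1,0,4]),
  (17579, [0,1,1,0,5,1,1]),
  (17839, [0,1,1,5,4,3]),
  (18083, [1,1,2]),
  (18343, [0,1,1,5,1,3]),
  (18680, [4,2]),
  (18940, [2,1,3,5,4]),
  (19184, [2,1,0,0,5,4]),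
  (19444, [2,1,0,5,4]),
  (19465, [0,2,1,1,3]),
  (19725, [2,1,0,4]),
  (19969, [2]),
  (20229, [2,1,3,4]),
  (20569, [1,0,2]),
  (20894, [0,0,4,0,5,1]),
  (21203, [1,0,2,1,1]),
  (21268, [0,0,4,0,5,4]),
  (21739, [1,1,0,2,1,1]),
  (21804, [0,1,1,5,4]),
  (22113, [1,1,0,2]),
  (22438, [0,1,1,5,1]),
  (22649, [4,0,2]),
  (22974, [0,0,1,0,5,1]),
  (23283, [4,0,2,1,1]),
  (23348, [0,0,1,0,5,4]),
  (23755, [0,2,1,1]),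
  (23820, [2,1,0,4,0]),
  (24129, [0,2]),
  (24454, [2,1,1,3,4]),
  (24664, [1,0,0,2]),
  (25054, [1,2,3,4,3]),
  (25168, [0,0,2,2,4,5]),
  (25558, [1,2,3,1,3]),
  (25643, [0,1,1,3,5,1,1]),
  (26029, [0,1,1,5,4,0]),
  (26147, [0,0,1,1,2]),
  (26533, [0,1,1,5,1,0]),
  (26874, [4,0,0,2]),
  (27004, [4,2,3,4,3]),
  (27378, [0,0,1,5,1,1]),
  (27508, [4,2,3,1,3]),
  (27785, [0,2,1,1,0]),
  (27919, [2,3,1,3]),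
  (28289, [0,0,2]),
  (28423, [2,3,4,3]),
  (28763, [1,2,3]),
  (28958, [1,2,3,4]),
  (29393, [1,2,3,1,1]),
  (29588, [1,2,3,1]),
  (29803, [1,1,2,3,1,1]),
  (29998, [1,1,2,3,1]),
  (30433, [1,1,2,3]),
  (30628, [1,1,2,3,4]),
  (30843, [4,2,3]),
  (31038, [4,2,3,4]),
  (31473, [4,2,3,1,1]),
  (31668, [4,2,3,1]),
  (31819, [2,3,1,1]),
  (32014, [2,3,1]),
  (32449, [2,3]),
  (32644, [2,3,4]),
  (37209, [1,2,4,0]),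
  (37339, [1,2,4,3]),
  (37648, [0,0,4,5,4]),
  (37778, [1,0,0,2,1]),
  (37924, [0,1,1,3,5,4]),
  (38054, [0,0,1,1,2,1]),
  (38509, [1,1,2,4,0]),
  (38639, [1,1,2,4,3]),
  (39224, [0,0,1,5,4]),
  (39354, [4,0,0,2,1]),
  (39793, [4,2,4,0]),
  (39923, [4,2,4,3]),
  (40005, [2,4,0]),
  (40135, [2,4,3]),
  (40460, [0,0,2,1,0,0]),
  (40590, [0,0,2,1]),
  (45338, [1,2,4]),
  (45464, [1,2,4,0,0]),
  (45907, [0,0,4,5,4,3]),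
  (46033, [0,0,4,5,4,0]),
  (46183, [0,0,1,1,2,1,3]),
  (46309, [0,0,1,1,2,1,0]),
  (46638, [0,1,1,0,5,1]),
  (46764, [1,1,2,4]),
  (47483, [0,0,1,5,4,3]),
  (47609, [0,0,1,5,4,0]),
  (47922, [4,2,4]),
  (48048, [4,2,4,0,0]),
  (48134, [2,4,0,0]),
  (48260, [2,4]),
  (48719, [0,0,2,1,3]),
  (48845, [0,0,2,1,0]),
  (49360, [0,0,4,5]),
  (49620, [1,0,2,4,3]),
  (49880, [1,0,0,2,1,1]),
  (50140, [1,0,2,1,3]),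
  (50209, [0,1,1,3,5]),
  (50469, [1,1,0,2,4,3]),
  (50729, [0,0,1,1,2,1,1]),
  (50989, [1,1,0,2,1,3]),
  (51314, [0,0,1,5]),
  (51574, [4,0,2,4,3]),
  (51834, [2,1,5,1,0,0]),
  (52094, [4,0,2,1,3]),
  (52355, [1,0,0,1,5]),
  (52615, [0,2,4,3]),
  (52875, [0,0,2,1,1]),
  (53135, [0,2,1,3]),
  (53459, [0,0,4,3,5]),
  (53654, [0,0,4,3,5,1]),
  (53849, [1,2,1,1,0]),
  (54044, [0,0,4,3,5,4]),
  (54499, [3,1,1,5]),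
  (54694, [3,1,1,5,1]),
  (54889, [1,1,2,1,1,0]),
  (55084, [3,1,1,5,4]),
  (55539, [0,0,1,3,5]),
  (55734, [0,0,1,3,5,1]),
  (55929, [2,1,5,1,0]),
  (56124, [0,0,1,3,5,4]),
  (56515, [0,2,1,0,0,1]),
  (56710, [0,2,4,0,0]),
  (56905, [2,1,1,0]),
  (57100, [0,2,1,0,0]),
  (57554, [0,0,4,0,0,5]),
  (57684, [1,0,2,4,0]),
  (58074, [1,2,1,1]),
  (58204, [1,0,2,1,0]),
  (58529, [0,1,1,0,5]),
  (58663, [1,1,0,2,4,0]),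
  (59049, [1,1,2,1,1]),
  (59183, [1,1,0,2,1,0]),
  (59504, [0,0,1,0,0,5]),
  (59894, [2,1,3,5,1]),
  (60024, [2,1,5,1]),
  (60414, [2,1,0,5,1]),
  (60419, [2,1,0,0,1]),
  (60805, [0,2,4,0]),
  (60939, [2,1,1]),
  (61325, [0,2,1,0]),
  (61649, [0,0,4,0,5]),
  (61718, [1,0,2,4]),
  (62043, [1,2,1,1,3]),
  (62364, [1,0,2,1]),
  (62563, [0,1,1,5]),
  (62884, [1,1,0,2,4]),
  (63209, [0,1,1,5,1,1]),
  (63278, [1,1,0,2,1]),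
  (63729, [0,0,1,0,5]),
  (63798, [4,0,2,4]),
  (64123, [2,1,5,1,3]),
  (64444, [4,0,2,1]),
  (64579, [0,1,0,0,1,5]),
  (64900, [0,2,4]),
  (65225, [2,1,1,3]),
  (65294, [0,2,1])]
def P2 : List (ℕ × List (Fin 6)) := [
  (65614, [1]),
  (65793, []),
  (66244, [4]),
  (66443, [1,1]),
  (66654, [0,1,2,3,4,3]),
  (66833, [2,1,3,4,5]),
  (67284, [0,1,0,2,4,3]),
  (67483, [0,1,2,4,3]),
  (67694, [0,1,0,2,2,4,3]),
  (67873, [0,1,2,2,4,3]),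
  (68324, [0,1,2,2,3,4,3]),
  (68523, [0,1,0,0,2,2,4,3]),
  (68734, [0,1,3,5,4,3]),
  (68913, [2,1,0,4,5]),
  (69364, [0,1,0,5,4,3]),
  (69563, [0,1,5,4,3]),
  (69709, [1,0]),
  (69953, [0]),
  (70213, [4,0]),
  (70473, [1,1,0]),
  (70814, [0,1,2,3,4]),
  (71058, [0,1,0,0,2,4]),
  (71318, [0,1,0,2,4]),
  (71578, [0,1,2,4]),
  (71919, [0,1,0,2,2,4]),
  (72163, [0,1,2,2,4]),
  (72423, [0,1,2,2,3,4]),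
  (72683, [0,1,0,0,2,2,4]),
  (72764, [0,1,3,5,4]),
  (73008, [0,1,0,0,5,4]),
  (73268, [0,1,0,5,4]),
  (73528, [0,1,5,4]),
  (73804, [1,0,0]),
  (74113, [0,0]),
  (74438, [4,0,0]),
  (74507, [0,0,1,1]),
  (74974, [0,1,2,1,3,4]),
  (75027, [2,3,4,3,5]),
  (75348, [0,1,0,2,4,0]),
  (75673, [0,1,2,4,0]),
  (75884, [0,0,2,1,1,2,4]),
  (76193, [0,1,2,2,4,0]),
  (76518, [0,0,1,2,1,1,2]),
  (76587, [0,1,0,0,2,2,4,0]),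
  (77054, [0,1,3,5,4,0]),
  (77107, [2,3,1,3,5]),
  (77428, [0,1,0,5,4,0]),
  (77753, [0,1,5,4,0]),
  (77903, [1,3]),
  (78273, [3]),
  (78407, [4,3]),
  (78793, [1,1,3]),
  (78878, [1,2,3,4,5]),
  (79248, [2,3,4,5]),
  (79382, [3,4,3,5,1]),
  (79768, [0,1,2,4,0,0]),
  (80109, [0,4,0,2,2,4]),
  (80227, [2,3,1,1,5]),
  (80613, [0,4,2,2,3,4]),
  (80747, [1,0,4,0,2,2,4]),
  (81084, [1,2,3,1,5]),
  (81202, [2,3,1,5]),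
  (81588, [3,4,2,3,1]),
  (81722, [0,1,5,4,0,0]),
  (82189, [1,0,4]),
  (82319, [3,1,3]),
  (82758, [0,4,0,0]),
  (82884, [0,4]),
  (83034, [0,1,2,1,1]),
  (83160, [0,1,0,0,2,1,1]),
  (83473, [0,1,2,3,1,1]),
  (83603, [0,1,0,2,1,1]),
  (84334, [0,4,0,0,2,2]),
  (84460, [0,4,2,2]),
  (84773, [1,0,4,2,2]),
  (84903, [3,1,2,2,3]),
  (85049, [0,1,3,5,1,1]),
  (85179, [0,1,0,5,1,1]),
  (85618, [0,1,5,1,1]),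
  (85744, [0,1,0,0,5,1,1]),
  (90444, [1,0,4,0]),
  (90574, [3,1]),
  (90887, [0,4,3]),
  (91013, [0,4,0]),
  (91163, [0,1,2,1,1,3]),
  (91289, [0,1,2,1,1,0]),
  (91728, [2,2,3,4,5]),
  (91858, [0,1,0,2,1,1,3]),
  (92463, [0,4,2,2,3]),
  (92589, [0,4,0,2,2]),
  (93028, [1,0,4,0,2,2]),
  (93158, [3,1,2,2]),
  (93304, [2,2,3,4,2]),
  (93434, [0,1,0,5,1,1,3]),
  (93747, [0,1,5,1,1,3]),
  (93873, [0,1,5,1,1,0]),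
  (98500, [0,0,4]),
  (98569, [0,1,1,3]),
  (98894, [0,0,1]),
  (99203, [1,0,0,1]),
  (99414, [0,1,2,3,1,3]),
  (99739, [0,1,2,1,3]),
  (100060, [0,1,0,2,1,3]),
  (100113, [3,4,5,4,0]),
  (100580, [0,1,2,2,3,1,3]),
  (100649, [0,1,2,2,1,3]),
  (100974, [0,1,0,2,2,1,3]),
  (101283, [0,0,2,1,1,2]),
  (101494, [0,1,3,5,1,3]),
  (101819, [0,1,5,1,3]),
  (102140, [0,1,0,5,1,3]),
  (102193, [3,4,2,4,0]),
  (102599, [0,0,4,3]),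
  (102859, [3,1,1]),
  (103119, [0,0,1,3]),
  (103363, [1,0,0,1,3]),
  (103444, [1,3,4,5,4]),
  (103704, [0,1,2,1,0,0]),
  (103964, [3,4,3,5,4]),
  (104208, [3,4,5,4]),
  (104549, [0,4,2,2,3,1]),
  (104809, [3,1,2,2,1]),
  (105069, [0,4,0,2,2,1]),
  (105313, [2,1,1,0,2]),
  (105654, [1,3,4,2,4]),
  (105914, [0,1,5,1,0,0]),
  (106174, [3,4,2,3,4]),
  (106418, [3,4,2,4]),
  (106694, [0,0,4,0,0]),
  (106889, [0,1,1,0]),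
  (107084, [0,0,1,0,0]),
  (107267, [0,0,1,0,0,1]),
  (107734, [0,1,2,1,0,4]),
  (107929, [0,1,2,1,0]),
  (108124, [0,1,0,2,1,0]),
  (108307, [3,4,5,4,3]),
  (108774, [1,2,1,1,2]),
  (108969, [0,1,2,2,1,0]),
  (109164, [2,1,1,2,4]),
  (109347, [2,1,1,2]),
  (109814, [0,1,3,5,1,0]),
  (110009, [0,1,5,1,0]),
  (110204, [0,1,0,5,1,0]),
  (110387, [3,4,2,4,3]),
  (110789, [0,0,4,0]),
  (110923, [0,1,1]),
  (111309, [0,0,1,0]),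
  (111427, [0,1,0,0,1]),
  (111764, [0,1,2,3,1]),
  (111898, [0,1,2,1]),
  (112284, [0,1,0,2,1]),
  (112402, [0,1,0,0,2,1]),
  (112743, [0,1,2,2,3,1]),
  (113129, [0,1,2,2,1]),
  (113263, [0,1,0,2,2,1]),
  (113633, [2,1,1,2,3]),
  (113718, [0,1,3,5,1]),
  (114104, [0,1,5,1]),
  (114238, [0,1,0,5,1]),
  (114608, [0,1,0,0,5,1]),
  (114949, [1,3,4]),
  (115014, [1,1,3,4]),
  (115079, [3,4,3]),
  (115140, [3,4]),
  (115729, [1,3,4,5]),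
  (115794, [1,1,3,4,5]),
  (115859, [3,4,3,5]),
  (115920, [3,4,5]),
  (117549, [1,3,4,2,2]),
  (117614, [1,1,3,4,2,2]),
  (117679, [3,4,2,2,3]),
  (117740, [3,4,2,2]),
  (118329, [1,3,4,2]),
  (118394, [1,1,3,4,2]),
  (118459, [3,4,2,3]),
  (118520, [3,4,2]),
  (123663, [0,1,3]),
  (123724, [0,1,0,0]),
  (123789, [0,1,0]),
  (123854, [0,1]),
  (124443, [0,1,2,3]),
  (124504, [0,1,0,0,2]),
  (124569, [0,1,0,2]),
  (124634, [0,1,2]),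
  (125223, [0,1,2,2,3]),
  (125284, [0,1,0,0,2,2]),
  (125349, [0,1,0,2,2]),
  (125414, [0,1,2,2]),
  (126003, [0,1,3,5]),
  (126064, [0,1,0,0,5]),
  (126129, [0,1,0,5]),
  (126194, [0,1,5])]
def P3 : List (ℕ × List (Fin 6)) := [
  (135472, [1,0,0,5,4]),
  (135602, [0,0,2,1,5]),
  (136057, [1,5,1,0]),
  (136187, [1,5,1,3]),
  (136269, [5,1,0]),
  (136399, [5,1,3]),
  (136708, [0,0,5,4]),
  (136838, [0,0,5,4,0,0]),
  (137553, [2,4,0,5]),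
  (137683, [2,4,3,5]),
  (138008, [4,0,0,5,4]),
  (138138, [0,0,1,2,1]),
  (138284, [0,0,1,1,5,4]),
  (138414, [0,1,1,2,3,1]),
  (138853, [1,1,5,1,0]),
  (138983, [1,1,5,1,3]),
  (143731, [0,0,2,1,3,5]),
  (143857, [0,0,2,1,0,5]),
  (144186, [1,5,1,0,0]),
  (144312, [1,5,1]),
  (144398, [5,1]),
  (144524, [5,1,0,0]),
  (144967, [0,0,5,4,3]),
  (145093, [0,0,5,4,0]),
  (145682, [2,4,0,0,5]),
  (145808, [2,4,5]),
  (146267, [0,0,1,2,1,3]),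
  (146393, [0,0,1,2,1,0]),
  (146543, [0,0,1,1,5,4,3]),
  (146669, [0,0,1,1,5,4,0]),
  (146982, [1,1,5,1]),
  (147108, [0,1,1,0,2,4]),
  (147704, [0,0,4,2]),
  (147838, [1,3,5,4,0]),
  (148208, [1,0,0,5,1,1]),
  (148342, [1,3,5,1,0]),
  (148619, [0,0,5,1,1]),
  (148749, [3,5,1,0]),
  (149123, [1,0,0,1,2]),
  (149253, [3,5,4,0]),
  (149594, [0,0,1,2]),
  (149980, [2,4,3,5,4]),
  (150098, [2,2,4,0,0,5]),
  (150484, [2,4,0,5,4]),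
  (150569, [0,0,1,1,5,1,1]),
  (150959, [0,1,1,2,4,3]),
  (151073, [0,1,1,2,3]),
  (151463, [0,1,1,2,1,3]),
  (151803, [0,0,4,2,3]),
  (151868, [1,3,5,4]),
  (152177, [1,5,1,1,0]),
  (152502, [1,3,5,1]),
  (152649, [5,1,1,0]),
  (152974, [3,5,1]),
  (153283, [0,5,1,0,0,1]),
  (153348, [3,5,4]),
  (153819, [0,0,1,2,3]),
  (153884, [4,3,5,4]),
  (154193, [2,2,4,0,5]),
  (154518, [4,3,5,1]),
  (154729, [1,1,5,1,1,0]),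
  (155054, [1,1,3,5,1]),
  (155363, [3,1,1,2]),
  (155428, [1,1,3,5,4]),
  (155898, [0,0,4,0,0,2]),
  (156158, [1,3,5,4,3]),
  (156402, [1,5,1,1]),
  (156662, [1,3,5,1,3]),
  (156683, [5,1,1]),
  (156943, [3,5,1,3]),
  (157187, [5,1,0,0,1]),
  (157447, [3,5,4,3]),
  (157784, [0,0,1,0,0,2]),
  (158044, [4,3,5,4,3]),
  (158288, [2,2,4,5]),
  (158548, [4,3,5,1,3]),
  (158889, [1,1,5,1,1]),
  (159149, [0,1,1,2,4,0]),
  (159393, [0,1,1,0,2]),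
  (159653, [0,1,1,2,1,0]),
  (159993, [0,0,4,0,2]),
  (160188, [0,0,4,0,2,1]),
  (160371, [1,5,1,1,3]),
  (160566, [0,0,4,0,2,4]),
  (160969, [5,1,1,3]),
  (161164, [3,5,1,0,0]),
  (161347, [0,1,0,0,1,2]),
  (161542, [3,5,4,0,0]),
  (162009, [0,0,1,0,2]),
  (162204, [0,0,1,0,2,1]),
  (162387, [2,2,4,3,5]),
  (162582, [0,0,1,0,2,4]),
  (163049, [0,1,1,2,1,1]),
  (163244, [0,1,1,2,4]),
  (163427, [0,1,1,2]),
  (163622, [0,1,1,2,1]),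
  (168248, [1,5,4]),
  (168313, [1,5,4,0]),
  (168378, [1,5,4,0,0]),
  (168443, [1,5,4,3]),
  (168964, [5,4]),
  (169029, [5,4,0]),
  (169094, [5,4,0,0]),
  (169159, [5,4,3]),
  (170768, [4,5,4]),
  (170833, [4,5,4,0]),
  (170898, [4,5,4,0,0]),
  (170963, [4,5,4,3]),
  (171564, [1,1,5,4]),
  (171629, [1,1,5,4,0]),
  (171694, [0,1,1,0,2,1]),
  (171759, [1,1,5,4,3]),
  (176946, [0,0,4,2,4]),
  (177011, [0,0,4,2,4,3]),
  (177072, [1,0,0,5,1]),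
  (177137, [0,0,4,2,4,0]),
  (177678, [0,0,5,1]),
  (177743, [0,0,5,1,3]),
  (177804, [0,0,5,1,0,0]),
  (177869, [0,0,5,1,0]),
  (178458, [0,0,1,2,4]),
  (178523, [0,0,1,2,4,3]),
  (178584, [4,0,0,5,1]),
  (178649, [0,0,1,2,4,0]),
  (179238, [0,0,1,1,5,1]),
  (179303, [0,0,1,1,5,1,3]),
  (179364, [0,1,1,2,3,4]),
  (179429, [0,0,1,1,5,1,0]),
  (180338, [1,5]),
  (180724, [1,0,5,4,3]),
  (180858, [1,0,5,1,1,3]),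
  (181244, [1,0,5,1,3]),
  (181249, [5]),
  (181639, [0,5,4,3]),
  (181769, [0,5,1,1,3]),
  (182159, [0,5,1,3]),
  (182480, [4,5]),
  (182614, [4,0,5,4,3]),
  (183000, [2,4,0,0,5,4]),
  (183134, [4,0,5,1,3]),
  (183459, [1,1,5]),
  (183589, [1,1,0,5,4,3]),
  (183979, [0,1,1,0,2,1,1]),
  (184109, [1,1,0,5,1,3]),
  (184433, [1,0,5]),
  (184628, [1,0,5,4]),
  (185083, [1,0,5,1,1]),
  (185278, [1,0,5,1]),
  (185409, [0,5]),
  (185604, [0,5,4]),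
  (186059, [0,5,1,1]),
  (186254, [0,5,1]),
  (186449, [4,0,5]),
  (186644, [4,0,5,4]),
  (187099, [4,0,5,1,1]),
  (187294, [4,0,5,1]),
  (187489, [1,1,0,5]),
  (187684, [1,1,0,5,4]),
  (188139, [1,1,0,5,1,1]),
  (188334, [1,1,0,5,1]),
  (188528, [1,0,0,5]),
  (188788, [1,0,5,4,0]),
  (189048, [0,0,2,1,5,1]),
  (189308, [1,0,5,1,0]),
  (189569, [0,0,5]),
  (189829, [0,5,4,0]),
  (190089, [0,5,1,1,0]),
  (190349, [0,5,1,0]),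
  (190674, [4,0,0,5]),
  (190934, [2,4,3,5,1]),
  (191194, [0,0,1,2,1,1]),
  (191454, [2,4,0,5,1]),
  (191523, [0,0,1,1,5]),
  (191783, [1,1,0,5,4,0]),
  (192043, [0,1,1,2,3,1,1]),
  (192303, [1,1,0,5,1,0]),
  (192627, [1,3,5]),
  (192948, [0,0,4,2,3,1]),
  (193273, [1,3,5,1,1]),
  (193342, [0,0,4,2,3,4]),
  (193729, [3,5]),
  (193798, [0,5,4,0,0]),
  (194123, [3,5,1,1]),
  (194444, [0,5,1,0,0]),
  (194643, [4,3,5]),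
  (194964, [0,0,1,2,3,1]),
  (195289, [4,3,5,1,1]),
  (195358, [0,0,1,2,3,4]),
  (195809, [1,1,3,5]),
  (195878, [2,3,1,2,2]),
  (196203, [1,1,3,5,1,1]),
  (196524, [2,3,4,2,2])]
def P4 : List (ℕ × List (Fin 6)) := [
  (196844, [0,0,4,2,2]),
  (197027, [0,0,1,2,2,4]),
  (197222, [0,0,1,2,2]),
  (197417, [0,0,1,2,2,1]),
  (197884, [0,2,1,3,5,4]),
  (198067, [0,2,1,3,5]),
  (198262, [0,2,1,3,5,1]),
  (198457, [3,1,5,4,0]),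
  (198860, [2,2,1,0,0]),
  (199043, [1,0,0,1,2,2]),
  (199238, [2,2,4,0,0]),
  (199433, [0,1,1,2,2,3]),
  (199900, [0,2,4,3,5,4]),
  (200083, [0,2,4,3,5]),
  (200278, [0,2,4,3,5,1]),
  (200473, [3,1,2,4,0]),
  (200943, [0,0,4,2,2,3]),
  (201057, [1,2,2,4,0]),
  (201447, [0,0,1,2,2,3]),
  (201577, [1,2,2,1,0]),
  (201918, [0,4,2,3,4]),
  (202032, [0,2,1,0,0,5]),
  (202422, [0,4,0,2,4]),
  (202552, [3,1,5,4]),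
  (202829, [2,2,1,0]),
  (203203, [0,2,1,0,0,1,5]),
  (203333, [2,2,4,0]),
  (203723, [2,2,3,1,1]),
  (203804, [0,4,3,5,4]),
  (204178, [0,2,4,0,0,5]),
  (204308, [0,4,0,5,4]),
  (204698, [3,1,2,4]),
  (205038, [0,0,4,0,0,2,2]),
  (205091, [1,2,2,4]),
  (205412, [0,0,1,0,0,2,2]),
  (205737, [1,2,2,1]),
  (205948, [0,4,2,3,4,3]),
  (206257, [0,2,1,0,5]),
  (206582, [0,4,0,2,4,3]),
  (206651, [3,1,5,4,3]),
  (207054, [2,2,1]),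
  (207107, [2,1,0,0,1,5]),
  (207428, [2,2,4]),
  (207753, [0,1,1,0,2,2]),
  (207964, [0,4,3,5,4,3]),
  (208273, [0,2,4,0,5]),
  (208598, [0,4,0,5,4,3]),
  (208667, [3,1,2,4,3]),
  (209133, [0,0,4,0,2,2]),
  (209377, [1,2,2,4,3]),
  (209637, [0,0,1,0,2,2]),
  (209897, [1,2,2,1,3]),
  (209982, [1,0,2,4,5]),
  (210226, [0,2,1,5]),
  (210486, [3,1,3,5,1]),
  (210746, [0,4,0,0,2,1]),
  (211023, [2,2,1,3]),
  (211267, [0,1,0,0,1,2,2]),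
  (211527, [2,2,4,3]),
  (211787, [0,1,1,2,2]),
  (212124, [1,0,2,1,5]),
  (212368, [0,2,4,5]),
  (212628, [3,1,2,3,1]),
  (212888, [0,4,0,0,5,1]),
  (213797, [4,2,2,3,1]),
  (213862, [1,2,2,1,0,4]),
  (213927, [1,2,2,3,1]),
  (213988, [1,2,2,3,1,3]),
  (214577, [0,4,2,3,1,1]),
  (214642, [2,2,3,1,5]),
  (214707, [0,4,0,2,1,1]),
  (214768, [0,2,1,0,0,5,4]),
  (215309, [2,2,1,0,4]),
  (215374, [2,2,3,1]),
  (215439, [2,2,3,1,3]),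
  (215500, [1,1,2,2,3,1]),
  (216089, [0,4,3,5,1,1]),
  (216154, [2,2,3,1,2]),
  (216219, [0,4,0,5,1,1]),
  (216280, [0,2,4,0,0,5,4]),
  (221487, [1,0,2,2,4]),
  (221548, [0,2,1,1,2,4]),
  (221613, [4,0,2,2,4]),
  (221678, [1,0,2,2,4,3]),
  (222267, [0,2,1,5,1,3]),
  (222328, [0,2,1,5,1]),
  (222393, [0,2,1,5,1,0]),
  (222458, [0,2,1,5,1,0,0]),
  (224007, [0,2,2,4,3]),
  (224068, [0,2,2,4]),
  (224133, [0,2,2,4,0]),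
  (224198, [0,2,2,4,0,0]),
  (224787, [0,2,2,4,3,5]),
  (224848, [0,2,2,4,5]),
  (224913, [0,2,2,4,0,5]),
  (224978, [0,2,2,4,0,0,5]),
  (229478, [1,2,2]),
  (229803, [0,0,1,0,0,2,2,4]),
  (230124, [4,2,2]),
  (230177, [0,2,1,1,2,3]),
  (230644, [0,2,1,0,5,4]),
  (230713, [2,1,3,4,2]),
  (231038, [0,2,1,0,5,1]),
  (231347, [0,4,2,4,3]),
  (231494, [0,0,2,2,4,0,0]),
  (231819, [1,1,2,2]),
  (232140, [0,0,2,2,1,0,0]),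
  (232193, [2,2]),
  (232660, [0,2,4,0,5,4]),
  (232729, [2,1,0,4,2]),
  (233054, [0,2,4,0,5,1]),
  (233363, [0,4,5,4,3]),
  (233573, [1,0,2,2]),
  (233963, [1,0,0,2,2,4,3]),
  (234093, [4,0,2,2]),
  (234467, [0,2,1,1,2]),
  (234548, [1,0,4,5,4]),
  (234938, [0,4,0,0,2,4]),
  (235068, [3,1,3,5,4]),
  (235442, [0,4,2,4]),
  (235719, [0,0,2,2,4,3]),
  (235849, [1,1,0,2,2]),
  (236239, [0,0,2,2,1,3]),
  (236353, [0,2,2]),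
  (236694, [1,0,4,2,4]),
  (236824, [0,4,0,0,5,4]),
  (237214, [3,1,2,3,4]),
  (237328, [0,4,5,4]),
  (237668, [1,0,0,2,2]),
  (237867, [1,0,0,2,2,4]),
  (238318, [4,0,0,2,2]),
  (238497, [0,2,1,1,0,2]),
  (238708, [0,4,2,3,1,3]),
  (238907, [2,3,4,2,3]),
  (239358, [0,4,0,2,1,3]),
  (239537, [0,4,2,4,0]),
  (239684, [0,0,2,2,4]),
  (239883, [0,0,1,1,2,2]),
  (240334, [0,0,2,2,1]),
  (240513, [0,0,2,2]),
  (240724, [0,4,3,5,1,3]),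
  (240923, [2,3,1,2,3]),
  (241374, [0,4,0,5,1,3]),
  (241553, [0,4,5,4,0]),
  (241767, [1,2,2,3]),
  (242027, [1,0,0,2,2,4,0]),
  (242287, [4,2,2,3]),
  (242531, [2,3,1,1,2]),
  (242868, [0,4,2,3,1]),
  (243128, [2,3,4,2]),
  (243388, [0,4,0,2,1]),
  (243632, [0,4,2,4,0,0]),
  (243909, [0,0,2,2,4,0]),
  (244169, [1,1,2,2,3]),
  (244429, [0,0,2,2,1,0]),
  (244673, [2,2,3]),
  (244758, [0,4,3,5,1]),
  (245018, [2,3,1,2]),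
  (245278, [0,4,0,5,1]),
  (245522, [0,4,5,4,0,0]),
  (246118, [0,1,2,1,1,2]),
  (246244, [1,2,2,3,4,3]),
  (246573, [4,0,2,2,1]),
  (246703, [1,0,2,2,1]),
  (246833, [1,0,4,5]),
  (246963, [3,1,3,5]),
  (247418, [0,4,0,0,2]),
  (247544, [0,4,2]),
  (248069, [2,2,1,3,4]),
  (248199, [2,2,3,4,3]),
  (248654, [0,2,2,1]),
  (248780, [0,2,2,1,0,0]),
  (248914, [0,4,0,0,5]),
  (249040, [0,4,5]),
  (249369, [1,0,4,2]),
  (249499, [3,1,2,3]),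
  (254247, [1,2,2,3,4]),
  (254373, [4,2,2,3,4]),
  (254828, [1,0,2,2,1,0]),
  (254958, [1,0,2,2,1,3]),
  (255088, [1,0,4,0,5]),
  (255218, [3,1,5]),
  (255547, [0,4,2,3]),
  (255673, [0,4,0,2]),
  (256324, [2,2,3,4]),
  (256454, [1,1,2,2,3,4]),
  (256783, [0,2,2,1,3]),
  (256909, [0,2,2,1,0]),
  (257043, [0,4,3,5]),
  (257169, [0,4,0,5]),
  (257624, [1,0,4,0,2]),
  (257754, [3,1,2])]
def pairs : List (ℕ × List (Fin 6)) := P1 ++ P2 ++ P3 ++ P4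

def stepC (i : Fin 6) (n : ℕ) : ℕ :=
  match (i : ℕ) with
  | 0 => FF f1 n | 1 => FF f2 n | 2 => FF f3 n
  | 3 => FF f4 n | 4 => FF f5 n | _ => FF f6 n

def evalC (w : List (Fin 6)) : ℕ := w.foldl (fun n i => stepC i n) 65793

lemma pairs_fst : pairs.map Prod.fst = L := by decide
lemma pairs_spec1 : ∀ p ∈ P1, evalC p.2 = p.1 := by decide
lemma pairs_spec2 : ∀ p ∈ P2, evalC p.2 = p.1 := by decide
lemma pairs_spec3 : ∀ p ∈ P3, evalC p.2 = p.1 := by decide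
lemma pairs_spec4 : ∀ p ∈ P4, evalC p.2 = p.1 := by decide

lemma pairs_spec : ∀ p ∈ pairs, evalC p.2 = p.1 := by
  intro p hp
  have h : p ∈ P1 ∨ p ∈ P2 ∨ p ∈ P3 ∨ p ∈ P4 := by
    simpa only [pairs, List.mem_append, or_assoc] using hp
  rcases h with h|h|h|h
  · exact pairs_spec1 p h
  · exact pairs_spec2 p h
  · exact pairs_spec3 p h
  · exact pairs_spec4 p h

def stepG (x1 x2 x3 : GLt) (i : Fin 6) : GLt :=
  match (i : ℕ) with
  | 0 => x1 | 1 => x2 | 2 => x3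
  | 3 => x1⁻¹ | 4 => x2⁻¹ | _ => x3⁻¹

lemma stepG_mem {x1 x2 x3 : GLt} (H : Subgroup GLt)
    (hx1 : x1 ∈ H) (hx2 : x2 ∈ H) (hx3 : x3 ∈ H) (i : Fin 6) :
    stepG x1 x2 x3 i ∈ H := by
  fin_cases i
  · exact hx1
  · exact hx2
  · exact hx3
  · exact H.inv_mem hx1
  · exact H.inv_mem hx2
  · exact H.inv_mem hx3

lemma val_inv_eq {u : GLt} {A B : Mat} (hu : (↑u : Mat) = A)
    (hBA : B * A = 1) : ((↑(u⁻¹) : Mat)) = B := by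
  calc (↑(u⁻¹) : Mat) = B * A * ↑(u⁻¹) := by rw [hBA, one_mul]
    _ = B * (↑u * ↑(u⁻¹)) := by rw [hu, mul_assoc]
    _ = B := by rw [← Units.val_mul, mul_inv_cancel, Units.val_one, mul_one]

lemma stepG_code {x1 x2 x3 : GLt}
    (hx1 : (↑x1 : Mat) = M1) (hx2 : (↑x2 : Mat) = M2) (hx3 : (↑x3 : Mat) = M3)
    (hx4 : (↑(x1⁻¹) : Mat) = M1i) (hx5 : (↑(x2⁻¹) : Mat) = M2i)
    (hx6 : (↑(x3⁻¹) : Mat) = M3i)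
    (x : GLt) (i : Fin 6) :
    cM ↑(x * stepG x1 x2 x3 i) = stepC i (cM ↑x) := by
  fin_cases i
  · show cM ↑(x * x1) = FF f1 (cM ↑x)
    rw [Units.val_mul, hx1, FF_spec f1_spec]
  · show cM ↑(x * x2) = FF f2 (cM ↑x)
    rw [Units.val_mul, hx2, FF_spec f2_spec]
  · show cM ↑(x * x3) = FF f3 (cM ↑x)
    rw [Units.val_mul, hx3, FF_spec f3_spec]
  · show cM ↑(x * x1⁻¹) = FF f4 (cM ↑x)
    rw [Units.val_mul, hx4, FF_spec f4_spec]
  · show cM ↑(x * x2⁻¹) = FF f5 (cM ↑x)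
    rw [Units.val_mul, hx5, FF_spec f5_spec]
  · show cM ↑(x * x3⁻¹) = FF f6 (cM ↑x)
    rw [Units.val_mul, hx6, FF_spec f6_spec]

lemma foldl_mem {x1 x2 x3 : GLt} (H : Subgroup GLt)
    (hx1 : x1 ∈ H) (hx2 : x2 ∈ H) (hx3 : x3 ∈ H) :
    ∀ (w : List (Fin 6)) (x : GLt), x ∈ H →
      w.foldl (fun y i => y * stepG x1 x2 x3 i) x ∈ H
  | [], _, hx => hx
  | i :: t, x, hx =>
      foldl_mem H hx1 hx2 hx3 t _ (H.mul_mem hx (stepG_mem H hx1 hx2 hx3 i))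

lemma foldl_code {x1 x2 x3 : GLt}
    (hx1 : (↑x1 : Mat) = M1) (hx2 : (↑x2 : Mat) = M2) (hx3 : (↑x3 : Mat) = M3)
    (hx4 : (↑(x1⁻¹) : Mat) = M1i) (hx5 : (↑(x2⁻¹) : Mat) = M2i)
    (hx6 : (↑(x3⁻¹) : Mat) = M3i) :
    ∀ (w : List (Fin 6)) (x : GLt),
      cM ↑(w.foldl (fun y i => y * stepG x1 x2 x3 i) x) =
        w.foldl (fun n i => stepC i n) (cM ↑x)
  | [], _ => rfl
  | i :: t, x => by
      rw [List.foldl_cons, List.foldl_cons,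
        foldl_code hx1 hx2 hx3 hx4 hx5 hx6 t _,
        stepG_code hx1 hx2 hx3 hx4 hx5 hx6 x i]

lemma M1i_mul : M1i * M1 = 1 := by decide
lemma M2i_mul : M2i * M2 = 1 := by decide
lemma M3i_mul : M3i * M3 = 1 := by decide
lemma cM_one : cM (1 : Mat) = 65793 := by decide

def fcode (H : Subgroup GLt) (x : ↥H) : ℕ := cM ↑(x : GLt)

lemma fcode_inj (H : Subgroup GLt) : Function.Injective (fcode H) :=
  fun _ _ h => Subtype.ext (Units.ext (cM_inj h))

end BurauAux

open BurauAux in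
/-- The image `F` of the homomorphism `B₄ → GL(3, ℤ/4)` sending `σ₁, σ₂, σ₃` to
`M1, M2, M3` is a finite group of order `768`. -/
theorem burau_mod4_image_card (φ : BraidGroup4 →* GL (Fin 3) (ZMod 4))
    (h1 : (↑(φ σ₁) : Matrix (Fin 3) (Fin 3) (ZMod 4)) = M1)
    (h2 : (↑(φ σ₂) : Matrix (Fin 3) (Fin 3) (ZMod 4)) = M2)
    (h3 : (↑(φ σ₃) : Matrix (Fin 3) (Fin 3) (ZMod 4)) = M3) :
    Nat.card φ.range = 768 := by
  set x1 := φ σ₁ with hx1def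
  set x2 := φ σ₂ with hx2def
  set x3 := φ σ₃ with hx3def
  have h4 : (↑(x1⁻¹) : Mat) = M1i := val_inv_eq h1 M1i_mul
  have h5 : (↑(x2⁻¹) : Mat) = M2i := val_inv_eq h2 M2i_mul
  have h6 : (↑(x3⁻¹) : Mat) = M3i := val_inv_eq h3 M3i_mul
  set K : Set GLt := {x1, x2, x3} with hKdef
  have hx1K : x1 ∈ K := Or.inl rfl
  have hx2K : x2 ∈ K := Or.inr (Or.inl rfl)
  have hx3K : x3 ∈ K := Or.inr (Or.inr rfl)
  -- the range of φ is the closure of the images of the generators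
  have h0 : Subgroup.closure (Set.range (PresentedGroup.of : Fin 3 → BraidGroup4)) = ⊤ :=
    PresentedGroup.closure_range_of _
  have hrg : Set.range (PresentedGroup.of : Fin 3 → BraidGroup4) = {σ₁, σ₂, σ₃} := by
    ext z
    constructor
    · rintro ⟨i, rfl⟩
      fin_cases i
      · exact Or.inl rfl
      · exact Or.inr (Or.inl rfl)
      · exact Or.inr (Or.inr rfl)
    · intro hz
      rcases hz with rfl | rfl | rfl
      · exact ⟨0, rfl⟩
      · exact ⟨1, rfl⟩
      · exact ⟨2, rfl⟩
  have hrange : φ.range = Subgroup.closure K := by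
    calc φ.range = Subgroup.map φ ⊤ := φ.range_eq_map
      _ = Subgroup.map φ (Subgroup.closure {σ₁, σ₂, σ₃}) := (congrArg (Subgroup.map φ) h0).symm.trans
            (congrArg (fun s => Subgroup.map φ (Subgroup.closure s)) hrg)
      _ = Subgroup.closure (φ '' {σ₁, σ₂, σ₃}) := MonoidHom.map_closure φ _
      _ = Subgroup.closure K := by
          rw [Set.image_insert_eq, Set.image_insert_eq, Set.image_singleton,
            ← hx1def, ← hx2def, ← hx3def, hKdef]
  -- the submonoid of elements stabilizing L
  have hU : ∀ x ∈ Subgroup.closure K, ∀ m : Mat, cM m ∈ L → cM (m * ↑x) ∈ L := by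
    let U : Submonoid GLt :=
      { carrier := {x : GLt | ∀ m : Mat, cM m ∈ L → cM (m * ↑x) ∈ L}
        one_mem' := by
          intro m hm
          simpa using hm
        mul_mem' := by
          intro a b ha hb m hm
          have hab : cM (m * ↑(a * b)) = cM ((m * ↑a) * ↑b) := by
            rw [Units.val_mul, mul_assoc]
          rw [hab]
          exact hb _ (ha _ hm) }
    have hgen : (K ∪ K⁻¹) ⊆ ↑U := by
      rintro y (hy | hy)
      · simp only [hKdef, Set.mem_insert_iff, Set.mem_singleton_iff] at hy
        rcases hy with rfl | rfl | rfl
        · intro m hm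
          rw [h1, ← FF_spec f1_spec]
          exact (L_closed _ hm).1
        · intro m hm
          rw [h2, ← FF_spec f2_spec]
          exact (L_closed _ hm).2.1
        · intro m hm
          rw [h3, ← FF_spec f3_spec]
          exact (L_closed _ hm).2.2.1
      · rw [Set.mem_inv] at hy
        simp only [hKdef, Set.mem_insert_iff, Set.mem_singleton_iff] at hy
        rcases hy with hy | hy | hy
        · have hyy : y = x1⁻¹ := by rw [← hy, inv_inv]
          subst hyy
          intro m hm
          rw [h4, ← FF_spec f4_spec]
          exact (L_closed _ hm).2.2.2.1
        · have hyy : y = x2⁻¹ := by rw [← hy, inv_inv]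
          subst hyy
          intro m hm
          rw [h5, ← FF_spec f5_spec]
          exact (L_closed _ hm).2.2.2.2.1
        · have hyy : y = x3⁻¹ := by rw [← hy, inv_inv]
          subst hyy
          intro m hm
          rw [h6, ← FF_spec f6_spec]
          exact (L_closed _ hm).2.2.2.2.2
    intro x hx m hm
    have hx' : x ∈ Submonoid.closure (K ∪ K⁻¹) := by
      rw [← Subgroup.closure_toSubmonoid]
      exact hx
    exact Submonoid.closure_le.2 hgen hx' m hm
  have hmem : ∀ x ∈ Subgroup.closure K, cM (↑x : Mat) ∈ L := by
    intro x hx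
    have := hU x hx 1 one_mem_L
    simpa using this
  -- lower bound: every code in L is achieved
  have hlow : ∀ n ∈ L, ∃ x : ↥(Subgroup.closure K), fcode _ x = n := by
    intro n hn
    rw [← pairs_fst] at hn
    obtain ⟨p, hp, hpn⟩ := List.mem_map.1 hn
    refine ⟨⟨p.2.foldl (fun y i => y * stepG x1 x2 x3 i) 1,
      foldl_mem _ (Subgroup.subset_closure hx1K)
        (Subgroup.subset_closure hx2K) (Subgroup.subset_closure hx3K) p.2 1
        (Subgroup.one_mem _)⟩, ?_⟩
    show cM ↑(p.2.foldl (fun y i => y * stepG x1 x2 x3 i) 1) = n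
    rw [foldl_code h1 h2 h3 h4 h5 h6 p.2 1]
    have hone : cM (↑(1 : GLt) : Mat) = 65793 := by rw [Units.val_one, cM_one]
    rw [hone, ← hpn]
    exact pairs_spec p hp
  -- conclude by counting
  rw [hrange]
  have hrangef : Set.range (fcode (Subgroup.closure K)) = {n : ℕ | n ∈ L} := by
    ext n
    constructor
    · rintro ⟨⟨x, hx⟩, rfl⟩
      exact hmem x hx
    · intro hn
      exact hlow n hn
  have hcard := Nat.card_range_of_injective (fcode_inj (Subgroup.closure K))
  rw [← hcard, hrangef]
  have hLset : {n : ℕ | n ∈ L} = (↑L.toFinset : Set ℕ) := by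
    ext n; simp
  rw [hLset, Nat.card_coe_set_eq, Set.ncard_coe_finset,
    List.toFinset_card_of_nodup L_nodup, L_len]
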